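/- If Γ ⊆ ℝⁿ is an n-set, then the set difference of its closure and Γ itself, closure(Γ) \ Γ, has zero Lebesgue measure. -/

import Mathlib

open Set Metric MeasureTheory Filter

/-- `Γ ⊆ ℝⁿ` is an `n`-set: it is Borel measurable and there is `c > 0` such that
`m(Γ ∩ B(x,r)) ≥ c rⁿ` for all `x ∈ Γ` and `0 < r ≤ 1`. -/
def IsNSet {n : ℕ} (Γ : Set (EuclideanSpace ℝ (Fin n))) : Prop :=
  MeasurableSet Γ ∧ ∃ c > (0:ℝ), ∀ x ∈ Γ, ∀ r : ℝ, 0 < r → r ≤ 1 →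
    ENNReal.ofReal (c * r ^ n) ≤ volume (Γ ∩ ball x r)

/-- If `Γ ⊆ ℝⁿ` is an `n`-set, then `closure Γ \ Γ` has zero Lebesgue measure. -/
theorem isNSet_closure_diff_null {n : ℕ} (Γ : Set (EuclideanSpace ℝ (Fin n))) (h : IsNSet Γ) :
    volume (closure Γ \ Γ) = 0 := by
  obtain ⟨hmeas, c, hc, hbound⟩ := h
  set K := volume (ball (0:EuclideanSpace ℝ (Fin n)) 1) with hK
  have hKpos : 0 < K := measure_ball_pos _ _ one_pos
  have hKlt : K < ⊤ := measure_ball_lt_top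
  set ε : ENNReal := ENNReal.ofReal (c / 2 ^ n) / K with hε
  have hεpos : 0 < ε := ENNReal.div_pos (by positivity) hKlt.ne
  have hdens := Besicovitch.ae_tendsto_measure_inter_div_of_measurableSet
    (volume : Measure (EuclideanSpace ℝ (Fin n))) hmeas
  rw [MeasureTheory.ae_iff] at hdens
  refine measure_mono_null (fun x hx => ?_) hdens
  simp only [mem_setOf_eq]
  intro htend
  have hind : Γ.indicator (1 : EuclideanSpace ℝ (Fin n) → ENNReal) x = 0 := indicator_of_notMem hx.2 _
  rw [hind] at htend
  -- ratio is ≥ ε for all 0 < r ≤ 1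
  have hratio : ∀ r : ℝ, 0 < r → r ≤ 1 →
      ε ≤ volume (Γ ∩ closedBall x r) / volume (closedBall x r) := by
    intro r hr hr1
    obtain ⟨y, hyΓ, hyx⟩ : ∃ y ∈ Γ, dist x y < r / 2 :=
      Metric.mem_closure_iff.1 hx.1 (r / 2) (by linarith)
    have hsub : Γ ∩ ball y (r / 2) ⊆ Γ ∩ closedBall x r := by
      refine inter_subset_inter_right _ (fun z hz => ?_)
      have : dist z x ≤ dist z y + dist y x := dist_triangle _ _ _
      rw [mem_ball] at hz
      rw [mem_closedBall]
      rw [dist_comm] at hyx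
      linarith
    have hnum : ENNReal.ofReal (c / 2 ^ n * r ^ n) ≤ volume (Γ ∩ closedBall x r) := by
      refine le_trans ?_ (le_trans (hbound y hyΓ (r / 2) (by linarith) (by linarith)) (measure_mono hsub))
      exact ENNReal.ofReal_le_ofReal (le_of_eq (by rw [div_pow]; ring))
    have hden : volume (closedBall x r) = ENNReal.ofReal (r ^ n) * K := by
      rw [Measure.addHaar_closedBall _ _ hr.le, finrank_euclideanSpace_fin]
    calc ε = ENNReal.ofReal (c / 2 ^ n) * ENNReal.ofReal (r ^ n) /
              (ENNReal.ofReal (r ^ n) * K) := by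
            rw [mul_comm (ENNReal.ofReal (r ^ n)) K,
              ENNReal.mul_div_mul_right _ _ (ENNReal.ofReal_pos.2 (pow_pos hr n)).ne' ENNReal.ofReal_ne_top]
      _ = ENNReal.ofReal (c / 2 ^ n * r ^ n) / (ENNReal.ofReal (r ^ n) * K) := by
            rw [ENNReal.ofReal_mul (by positivity)]
      _ ≤ volume (Γ ∩ closedBall x r) / volume (closedBall x r) := by
            rw [hden]; exact ENNReal.div_le_div_right hnum _
  have hev : ∀ᶠ r in nhdsWithin (0:ℝ) (Ioi 0),
      volume (Γ ∩ closedBall x r) / volume (closedBall x r) < ε :=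
    htend (ENNReal.nhds_zero_basis.mem_of_mem hεpos)
  have hev2 : ∀ᶠ r in nhdsWithin (0:ℝ) (Ioi 0), r ≤ 1 ∧ 0 < r := by
    filter_upwards [Icc_mem_nhdsGT_of_mem (by norm_num : (0:ℝ) ∈ Ico 0 1),
      self_mem_nhdsWithin] with r h1 h2
    exact ⟨h1.2, h2⟩
  obtain ⟨r, hlt, hr1, hr0⟩ := (hev.and hev2).exists
  exact absurd (hratio r hr0 hr1) (not_le.2 hlt)
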